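/- Let L and M be primitive rank-2 Z_2-submodules of Z_2 ⊕ Z_2 that share a common primitive vector u (i.e., u ∈ L ∩ M is primitive). If the multiplicity of L is at least the multiplicity of M, then L ⊆ M. -/

import Mathlib

def PrimVec (u : ℤ_[2] × ℤ_[2]) : Prop := IsUnit u.1 ∨ IsUnit u.2

lemma aux1 (u : ℤ_[2] × ℤ_[2]) (h : IsUnit u.1) :
    ∃ f : (ℤ_[2] × ℤ_[2]) →ₗ[ℤ_[2]] ℤ_[2],
      LinearMap.ker f = Submodule.span ℤ_[2] {u} := by
  obtain ⟨v, hv⟩ := h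
  refine ⟨u.1 • LinearMap.snd _ _ _ - u.2 • LinearMap.fst _ _ _, ?_⟩
  ext x
  simp only [LinearMap.mem_ker, LinearMap.sub_apply, LinearMap.smul_apply,
    LinearMap.snd_apply, LinearMap.fst_apply, smul_eq_mul,
    Submodule.mem_span_singleton, sub_eq_zero]
  constructor
  · intro hx
    refine ⟨(↑v⁻¹ : ℤ_[2]) * x.1, ?_⟩
    have hvu : (↑v⁻¹ : ℤ_[2]) * u.1 = 1 := by rw [← hv]; exact v.inv_mul
    have h2 : x.2 = (↑v⁻¹ : ℤ_[2]) * x.1 * u.2 := by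
      have := congrArg (fun t => (↑v⁻¹ : ℤ_[2]) * t) hx
      calc x.2 = ((↑v⁻¹ : ℤ_[2]) * u.1) * x.2 := by rw [hvu, one_mul]
        _ = (↑v⁻¹ : ℤ_[2]) * (u.1 * x.2) := by ring
        _ = (↑v⁻¹ : ℤ_[2]) * (u.2 * x.1) := by rw [hx]
        _ = (↑v⁻¹ : ℤ_[2]) * x.1 * u.2 := by ring
    have h1 : x.1 = (↑v⁻¹ : ℤ_[2]) * x.1 * u.1 := by
      calc x.1 = ((↑v⁻¹ : ℤ_[2]) * u.1) * x.1 := by rw [hvu, one_mul]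
        _ = (↑v⁻¹ : ℤ_[2]) * x.1 * u.1 := by ring
    ext
    · simp [Prod.smul_fst, smul_eq_mul, ← h1]
    · simp [Prod.smul_snd, smul_eq_mul, ← h2]
  · rintro ⟨c, rfl⟩
    simp [smul_eq_mul]
    ring

lemma aux (u : ℤ_[2] × ℤ_[2]) (h : PrimVec u) :
    ∃ f : (ℤ_[2] × ℤ_[2]) →ₗ[ℤ_[2]] ℤ_[2],
      LinearMap.ker f = Submodule.span ℤ_[2] {u} := by
  rcases h with h | h
  · exact aux1 u h
  · obtain ⟨f, hf⟩ := aux1 u.swap h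
    refine ⟨f ∘ₗ (LinearEquiv.prodComm ℤ_[2] ℤ_[2] ℤ_[2] : (ℤ_[2] × ℤ_[2]) →ₗ[ℤ_[2]] (ℤ_[2] × ℤ_[2])), ?_⟩
    rw [LinearMap.ker_comp, hf]
    ext x
    simp [Submodule.mem_comap, Submodule.mem_span_singleton, Prod.ext_iff]
    constructor
    · rintro ⟨c, h1, h2⟩; exact ⟨c, h2, h1⟩
    · rintro ⟨c, h1, h2⟩; exact ⟨c, h2, h1⟩

theorem stmt7 (L M : Submodule ℤ_[2] (ℤ_[2] × ℤ_[2])) (u : ℤ_[2] × ℤ_[2])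
    (huL : u ∈ L) (huM : u ∈ M) (hu : PrimVec u)
    (hLfin : L.toAddSubgroup.index ≠ 0) (hMfin : M.toAddSubgroup.index ≠ 0)
    (hge : M.toAddSubgroup.index ≤ L.toAddSubgroup.index) :
    L ≤ M := by
  obtain ⟨f, hker⟩ := aux u hu
  have hkerL : LinearMap.ker f ≤ L := by
    rw [hker]; exact Submodule.span_le.mpr (Set.singleton_subset_iff.mpr huL)
  have hkerM : LinearMap.ker f ≤ M := by
    rw [hker]; exact Submodule.span_le.mpr (Set.singleton_subset_iff.mpr huM)
  have hL : Submodule.comap f (Submodule.map f L) = L := by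
    rw [Submodule.comap_map_eq, sup_eq_left.mpr hkerL]
  have hM : Submodule.comap f (Submodule.map f M) = M := by
    rw [Submodule.comap_map_eq, sup_eq_left.mpr hkerM]
  rcases Std.Total.total (r := ((· ≤ ·) : Ideal ℤ_[2] → Ideal ℤ_[2] → Prop))
      (Submodule.map f L) (Submodule.map f M) with hle | hle
  · rw [← hL, ← hM]
    exact Submodule.comap_mono hle
  · have hML : M ≤ L := by
      rw [← hL, ← hM]
      exact Submodule.comap_mono hle
    have hML' : M.toAddSubgroup ≤ L.toAddSubgroup := hML
    have hdvd := AddSubgroup.index_dvd_of_le hML'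
    have hle2 : L.toAddSubgroup.index ≤ M.toAddSubgroup.index :=
      Nat.le_of_dvd (Nat.pos_of_ne_zero hMfin) hdvd
    have heq : L.toAddSubgroup.index = M.toAddSubgroup.index := le_antisymm hle2 hge
    have hrel := AddSubgroup.relIndex_mul_index hML'
    rw [heq] at hrel
    have hone : M.toAddSubgroup.relIndex L.toAddSubgroup = 1 := by
      have h1 : M.toAddSubgroup.relIndex L.toAddSubgroup * M.toAddSubgroup.index
          = 1 * M.toAddSubgroup.index := by rw [hrel, one_mul]
      exact Nat.eq_of_mul_eq_mul_right (Nat.pos_of_ne_zero hMfin) h1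
    exact AddSubgroup.relIndex_eq_one.mp hone
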